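/- Let n, s ≥ 1. Let A be a nonnegative n×n real matrix, b and c nonnegative vectors in ℝⁿ, and d ≥ 0 a real number, and let M be the (n+1)×(n+1) block matrix M = [[A, b],[cᵀ, d]]. Let B be a nonnegative n×s matrix whose i-th row sum equals b_i for every i, let C be the s×n matrix each of whose rows equals cᵀ, and let D be a nonnegative s×s matrix all of whose row sums equal d. Set M̃ = [[A, B],[C, D]], an (n+s)×(n+s) matrix. Then the spectral radius of M̃ equals the spectral radius of M. -/

import Mathlib

open Matrix

/-- Spectral radius of a real square matrix: the maximum of the moduli of its
complex eigenvalues (elements of the spectrum of the matrix over `ℂ`). -/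
noncomputable def specRad {n : Type*} [Fintype n] [DecidableEq n]
    (M : Matrix n n ℝ) : ℝ :=
  sSup ((fun z : ℂ => ‖z‖) '' spectrum ℂ (M.map (algebraMap ℝ ℂ)))

open scoped ENNReal NNReal

attribute [local instance] Matrix.linftyOpNormedRing Matrix.linftyOpNormedAlgebra

section Aux

variable {n s : ℕ}

structure SRE {n s : ℕ} (X : Matrix (Fin n ⊕ Fin s) (Fin n ⊕ Fin s) ℝ)
    (Y : Matrix (Fin n ⊕ Fin 1) (Fin n ⊕ Fin 1) ℝ) : Prop where
  nonneg : ∀ i j, 0 ≤ X i j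
  ul : ∀ i j, X (.inl i) (.inl j) = Y (.inl i) (.inl j)
  ur : ∀ i, ∑ j, X (.inl i) (.inr j) = Y (.inl i) (.inr 0)
  ll : ∀ k j, X (.inr k) (.inl j) = Y (.inr 0) (.inl j)
  lr : ∀ k, ∑ j, X (.inr k) (.inr j) = Y (.inr 0) (.inr 0)

lemma SRE.one : SRE (1 : Matrix (Fin n ⊕ Fin s) _ ℝ) (1 : Matrix (Fin n ⊕ Fin 1) _ ℝ) := by
  constructor
  · intro i j
    rw [Matrix.one_apply]
    split <;> norm_num
  · intro i j; simp [Matrix.one_apply]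
  · intro i; simp [Matrix.one_apply]
  · intro k j; simp [Matrix.one_apply]
  · intro k; simp [Matrix.one_apply]

lemma SRE.mul {X X' : Matrix (Fin n ⊕ Fin s) _ ℝ} {Y Y' : Matrix (Fin n ⊕ Fin 1) _ ℝ}
    (h : SRE X Y) (h' : SRE X' Y') : SRE (X * X') (Y * Y') := by
  constructor
  · intro i j
    rw [Matrix.mul_apply]
    exact Finset.sum_nonneg fun k _ => mul_nonneg (h.nonneg i k) (h'.nonneg k j)
  · intro i j
    simp only [Matrix.mul_apply, Fintype.sum_sum_type, Fin.sum_univ_one]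
    congr 1
    · exact Finset.sum_congr rfl fun k _ => by rw [h.ul, h'.ul]
    · calc ∑ k : Fin s, X (.inl i) (.inr k) * X' (.inr k) (.inl j)
          = ∑ k : Fin s, X (.inl i) (.inr k) * Y' (.inr 0) (.inl j) :=
            Finset.sum_congr rfl fun k _ => by rw [h'.ll]
        _ = (∑ k : Fin s, X (.inl i) (.inr k)) * Y' (.inr 0) (.inl j) := by
            rw [Finset.sum_mul]
        _ = _ := by rw [h.ur]
  · intro i
    simp only [Matrix.mul_apply, Fintype.sum_sum_type, Fin.sum_univ_one]
    rw [Finset.sum_add_distrib]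
    congr 1
    · rw [Finset.sum_comm]
      refine Finset.sum_congr rfl fun k _ => ?_
      rw [← Finset.mul_sum, h.ul, h'.ur]
    · rw [Finset.sum_comm]
      calc ∑ a2 : Fin s, ∑ x : Fin s, X (.inl i) (.inr a2) * X' (.inr a2) (.inr x)
          = ∑ a2 : Fin s, X (.inl i) (.inr a2) * Y' (.inr 0) (.inr 0) := by
            refine Finset.sum_congr rfl fun a2 _ => ?_
            rw [← Finset.mul_sum, h'.lr]
        _ = _ := by rw [← Finset.sum_mul, h.ur]
  · intro k j
    simp only [Matrix.mul_apply, Fintype.sum_sum_type, Fin.sum_univ_one]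
    congr 1
    · exact Finset.sum_congr rfl fun l _ => by rw [h.ll, h'.ul]
    · calc ∑ l : Fin s, X (.inr k) (.inr l) * X' (.inr l) (.inl j)
          = ∑ l : Fin s, X (.inr k) (.inr l) * Y' (.inr 0) (.inl j) :=
            Finset.sum_congr rfl fun l _ => by rw [h'.ll]
        _ = (∑ l : Fin s, X (.inr k) (.inr l)) * Y' (.inr 0) (.inl j) := by
            rw [Finset.sum_mul]
        _ = _ := by rw [h.lr]
  · intro k
    simp only [Matrix.mul_apply, Fintype.sum_sum_type, Fin.sum_univ_one]
    rw [Finset.sum_add_distrib]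
    congr 1
    · rw [Finset.sum_comm]
      refine Finset.sum_congr rfl fun l _ => ?_
      rw [← Finset.mul_sum, h.ll, h'.ur]
    · rw [Finset.sum_comm]
      calc ∑ a2 : Fin s, ∑ x : Fin s, X (.inr k) (.inr a2) * X' (.inr a2) (.inr x)
          = ∑ a2 : Fin s, X (.inr k) (.inr a2) * Y' (.inr 0) (.inr 0) := by
            refine Finset.sum_congr rfl fun a2 _ => ?_
            rw [← Finset.mul_sum, h'.lr]
        _ = _ := by rw [← Finset.sum_mul, h.lr]

lemma SRE.pow {X : Matrix (Fin n ⊕ Fin s) _ ℝ} {Y : Matrix (Fin n ⊕ Fin 1) _ ℝ}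
    (h : SRE X Y) (k : ℕ) : SRE (X ^ k) (Y ^ k) := by
  induction k with
  | zero => simpa using SRE.one
  | succ k ih => rw [pow_succ, pow_succ]; exact ih.mul h

end Aux

section Aux2

variable {n s : ℕ}

lemma sre_nnnorm_map_eq (hs : 1 ≤ s) {X : Matrix (Fin n ⊕ Fin s) _ ℝ}
    {Y : Matrix (Fin n ⊕ Fin 1) _ ℝ} (h : SRE X Y) :
    ‖X.map (algebraMap ℝ ℂ)‖₊ = ‖Y.map (algebraMap ℝ ℂ)‖₊ := by
  have hYn : ∀ i j, 0 ≤ Y i j := by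
    rintro (i | i) (j | j)
    · rw [← h.ul]; exact h.nonneg _ _
    · rw [Subsingleton.elim j 0, ← h.ur]
      exact Finset.sum_nonneg fun k _ => h.nonneg _ _
    · rw [Subsingleton.elim i 0, ← h.ll ⟨0, hs⟩]; exact h.nonneg _ _
    · rw [Subsingleton.elim i 0, Subsingleton.elim j 0, ← h.lr ⟨0, hs⟩]
      exact Finset.sum_nonneg fun k _ => h.nonneg _ _
  have keyL : ∀ i : Fin n,
      ∑ j, ‖(X.map (algebraMap ℝ ℂ)) (Sum.inl i) j‖₊
        = ∑ j, ‖(Y.map (algebraMap ℝ ℂ)) (Sum.inl i) j‖₊ := by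
    intro i
    refine NNReal.coe_injective ?_
    push_cast
    simp only [Matrix.map_apply, Complex.coe_algebraMap,
      Complex.norm_real, Real.norm_eq_abs]
    rw [Fintype.sum_sum_type, Fintype.sum_sum_type, Fin.sum_univ_one]
    rw [Finset.sum_congr rfl fun j _ => abs_of_nonneg (h.nonneg (.inl i) (.inr j)),
      Finset.sum_congr rfl fun (j : Fin n) _ => abs_of_nonneg (hYn (.inl i) (.inl j)),
      abs_of_nonneg (hYn (.inl i) (.inr 0)), h.ur]
    congr 1
    exact Finset.sum_congr rfl fun j _ => by rw [abs_of_nonneg (h.nonneg _ _), h.ul i j]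
  have keyR : ∀ k : Fin s,
      ∑ j, ‖(X.map (algebraMap ℝ ℂ)) (Sum.inr k) j‖₊
        = ∑ j, ‖(Y.map (algebraMap ℝ ℂ)) (Sum.inr 0) j‖₊ := by
    intro k
    refine NNReal.coe_injective ?_
    push_cast
    simp only [Matrix.map_apply, Complex.coe_algebraMap,
      Complex.norm_real, Real.norm_eq_abs]
    rw [Fintype.sum_sum_type, Fintype.sum_sum_type, Fin.sum_univ_one]
    rw [Finset.sum_congr rfl fun j _ => abs_of_nonneg (h.nonneg (.inr k) (.inr j)),
      Finset.sum_congr rfl fun (j : Fin n) _ => abs_of_nonneg (hYn (.inr 0) (.inl j)),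
      abs_of_nonneg (hYn (.inr 0) (.inr 0)), h.lr]
    congr 1
    exact Finset.sum_congr rfl fun j _ => by rw [abs_of_nonneg (h.nonneg _ _), h.ll k j]
  rw [Matrix.linfty_opNNNorm_def, Matrix.linfty_opNNNorm_def]
  apply le_antisymm
  · refine Finset.sup_le ?_
    rintro (i | k) _
    · rw [keyL i]; exact Finset.le_sup (f := fun i => ∑ j, ‖(Y.map (algebraMap ℝ ℂ)) i j‖₊) (Finset.mem_univ (Sum.inl i))
    · rw [keyR k]; exact Finset.le_sup (f := fun i => ∑ j, ‖(Y.map (algebraMap ℝ ℂ)) i j‖₊) (Finset.mem_univ (Sum.inr 0))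
  · refine Finset.sup_le ?_
    rintro (i | k) _
    · rw [← keyL i]; exact Finset.le_sup (f := fun i => ∑ j, ‖(X.map (algebraMap ℝ ℂ)) i j‖₊) (Finset.mem_univ (Sum.inl i))
    · rw [Subsingleton.elim k 0, ← keyR ⟨0, hs⟩]
      exact Finset.le_sup (f := fun i => ∑ j, ‖(X.map (algebraMap ℝ ℂ)) i j‖₊) (Finset.mem_univ (Sum.inr (⟨0, hs⟩ : Fin s) : Fin n ⊕ Fin s))

end Aux2

section Aux3

variable {n s : ℕ}

lemma spectrum_subset_lift (hs : 1 ≤ s)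
    (A : Matrix (Fin n) (Fin n) ℝ) (b c : Fin n → ℝ) (d : ℝ)
    (B : Matrix (Fin n) (Fin s) ℝ) (hBrow : ∀ i, ∑ j, B i j = b i)
    (D : Matrix (Fin s) (Fin s) ℝ) (hDrow : ∀ i, ∑ j, D i j = d) :
    spectrum ℂ ((Matrix.fromBlocks A (Matrix.of fun (i : Fin n) (_ : Fin 1) => b i)
        (Matrix.of fun (_ : Fin 1) (j : Fin n) => c j)
        (Matrix.of fun (_ : Fin 1) (_ : Fin 1) => d)).map (algebraMap ℝ ℂ)) ⊆
      spectrum ℂ ((Matrix.fromBlocks A B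
        (Matrix.of fun (_ : Fin s) (j : Fin n) => c j) D).map (algebraMap ℝ ℂ)) := by
  intro μ hμ
  rw [spectrum.mem_iff] at hμ ⊢
  rw [Matrix.isUnit_iff_isUnit_det, isUnit_iff_ne_zero, not_not,
    ← Matrix.exists_mulVec_eq_zero_iff] at hμ ⊢
  obtain ⟨v, hv0, hv⟩ := hμ
  rw [Matrix.sub_mulVec, Algebra.algebraMap_eq_smul_one, Matrix.smul_mulVec,
    Matrix.one_mulVec, sub_eq_zero] at hv
  have hL : ∀ i, ∑ j, (algebraMap ℝ ℂ) (A i j) * v (Sum.inl j)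
      + (algebraMap ℝ ℂ) (b i) * v (Sum.inr 0) = μ * v (Sum.inl i) := by
    intro i
    simpa [Matrix.mulVec, dotProduct, Fintype.sum_sum_type, Fin.sum_univ_one]
      using (congrFun hv (Sum.inl i)).symm
  have hR : ∑ j, (algebraMap ℝ ℂ) (c j) * v (Sum.inl j)
      + (algebraMap ℝ ℂ) d * v (Sum.inr 0) = μ * v (Sum.inr 0) := by
    simpa [Matrix.mulVec, dotProduct, Fintype.sum_sum_type, Fin.sum_univ_one]
      using (congrFun hv (Sum.inr 0)).symm
  refine ⟨Sum.elim (fun i => v (Sum.inl i)) (fun _ => v (Sum.inr 0)), ?_, ?_⟩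
  · intro hw
    apply hv0
    funext i
    cases i with
    | inl i => exact congrFun hw (Sum.inl i)
    | inr k =>
        rw [Subsingleton.elim k 0]
        exact congrFun hw (Sum.inr ⟨0, hs⟩)
  · rw [Matrix.sub_mulVec, Algebra.algebraMap_eq_smul_one, Matrix.smul_mulVec,
      Matrix.one_mulVec, sub_eq_zero]
    funext i
    cases i with
    | inl i =>
        show μ * v (Sum.inl i) = _
        simp only [Matrix.mulVec, dotProduct, Fintype.sum_sum_type, Fin.sum_univ_one,
          Matrix.map_apply, Matrix.fromBlocks_apply₁₁, Matrix.fromBlocks_apply₁₂,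
          Sum.elim_inl, Sum.elim_inr, Matrix.of_apply]
        rw [← Finset.sum_mul, ← map_sum, hBrow, ← hL i]
    | inr k =>
        show μ * v (Sum.inr 0) = _
        simp only [Matrix.mulVec, dotProduct, Fintype.sum_sum_type, Fin.sum_univ_one,
          Matrix.map_apply, Matrix.fromBlocks_apply₂₁, Matrix.fromBlocks_apply₂₂,
          Sum.elim_inl, Sum.elim_inr, Matrix.of_apply]
        rw [← Finset.sum_mul, ← map_sum, hDrow, ← hR]

end Aux3


/-- A row sum expansion of a nonnegative matrix on its last diagonal entry
preserves the spectral radius. -/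
theorem rowSumExpansion_specRad_eq
    {n s : ℕ} (hn : 1 ≤ n) (hs : 1 ≤ s)
    (A : Matrix (Fin n) (Fin n) ℝ) (b c : Fin n → ℝ) (d : ℝ)
    (hA : ∀ i j, 0 ≤ A i j) (hb : ∀ i, 0 ≤ b i) (hc : ∀ i, 0 ≤ c i) (hd : 0 ≤ d)
    (B : Matrix (Fin n) (Fin s) ℝ) (hB : ∀ i j, 0 ≤ B i j)
    (hBrow : ∀ i, ∑ j, B i j = b i)
    (D : Matrix (Fin s) (Fin s) ℝ) (hD : ∀ i j, 0 ≤ D i j)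
    (hDrow : ∀ i, ∑ j, D i j = d) :
    specRad (Matrix.fromBlocks A B
        (Matrix.of fun (_ : Fin s) (j : Fin n) => c j) D) =
      specRad (Matrix.fromBlocks A
        (Matrix.of fun (i : Fin n) (_ : Fin 1) => b i)
        (Matrix.of fun (_ : Fin 1) (j : Fin n) => c j)
        (Matrix.of fun (_ : Fin 1) (_ : Fin 1) => d)) := by
  classical
  haveI : Nonempty (Fin n) := ⟨⟨0, hn⟩⟩
  haveI : Nonempty (Fin s) := ⟨⟨0, hs⟩⟩
  set X := Matrix.fromBlocks A B (Matrix.of fun (_ : Fin s) (j : Fin n) => c j) D with hXdef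
  set Y := Matrix.fromBlocks A (Matrix.of fun (i : Fin n) (_ : Fin 1) => b i)
    (Matrix.of fun (_ : Fin 1) (j : Fin n) => c j)
    (Matrix.of fun (_ : Fin 1) (_ : Fin 1) => d) with hYdef
  have hSRE : SRE X Y := by
    constructor
    · rintro (i | i) (j | j) <;>
        simp only [hXdef, Matrix.fromBlocks_apply₁₁, Matrix.fromBlocks_apply₁₂,
          Matrix.fromBlocks_apply₂₁, Matrix.fromBlocks_apply₂₂, Matrix.of_apply]
      exacts [hA i j, hB i j, hc j, hD i j]
    · intro i j; simp [hXdef, hYdef]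
    · intro i
      simp only [hXdef, hYdef, Matrix.fromBlocks_apply₁₂, Matrix.of_apply]
      exact hBrow i
    · intro k j; simp [hXdef, hYdef]
    · intro k
      simp only [hXdef, hYdef, Matrix.fromBlocks_apply₂₂, Matrix.of_apply]
      exact hDrow k
  set Xc := X.map (algebraMap ℝ ℂ) with hXc
  set Yc := Y.map (algebraMap ℝ ℂ) with hYc
  have hsub : spectrum ℂ Yc ⊆ spectrum ℂ Xc :=
    spectrum_subset_lift hs A b c d B hBrow D hDrow
  have hnorm : ∀ k : ℕ, ‖Xc ^ k‖₊ = ‖Yc ^ k‖₊ := by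
    intro k
    have h1 : Xc ^ k = (X ^ k).map (algebraMap ℝ ℂ) := by
      rw [hXc, ← RingHom.mapMatrix_apply, ← RingHom.mapMatrix_apply, map_pow]
    have h2 : Yc ^ k = (Y ^ k).map (algebraMap ℝ ℂ) := by
      rw [hYc, ← RingHom.mapMatrix_apply, ← RingHom.mapMatrix_apply, map_pow]
    rw [h1, h2]
    exact sre_nnnorm_map_eq hs (hSRE.pow k)
  have hbdY : BddAbove ((fun z : ℂ => ‖z‖) '' spectrum ℂ Yc) :=
    ((Yc.finite_spectrum).image _).bddAbove
  have hbdX : BddAbove ((fun z : ℂ => ‖z‖) '' spectrum ℂ Xc) :=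
    ((Xc.finite_spectrum).image _).bddAbove
  have hneY : (spectrum ℂ Yc).Nonempty := spectrum.nonempty Yc
  have hneX : (spectrum ℂ Xc).Nonempty := spectrum.nonempty Xc
  have hkey : ∀ μ ∈ spectrum ℂ Xc, ‖μ‖ ≤ specRad Y := by
    intro μ hμ
    have h0 : 0 ≤ specRad Y := by
      obtain ⟨ν, hν⟩ := hneY
      exact le_trans (norm_nonneg ν) (le_csSup hbdY ⟨ν, hν, rfl⟩)
    have hmono : spectralRadius ℂ Yc ≤ ENNReal.ofReal (specRad Y) := by
      rw [spectralRadius]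
      refine iSup₂_le fun ν hν => ?_
      rw [← enorm_eq_nnnorm, ← ofReal_norm]
      refine ENNReal.ofReal_le_ofReal ?_
      exact le_csSup hbdY ⟨ν, hν, rfl⟩
    have hle : (‖μ‖₊ : ℝ≥0∞) ≤ spectralRadius ℂ Yc := by
      refine ge_of_tendsto
        (spectrum.pow_nnnorm_pow_one_div_tendsto_nhds_spectralRadius Yc) ?_
      filter_upwards [Filter.eventually_ge_atTop 1] with k hk
      have hk0 : ((k : ℝ)) ≠ 0 := Nat.cast_ne_zero.mpr (by omega)
      have hpow : μ ^ k ∈ spectrum ℂ (Xc ^ k) :=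
        spectrum.pow_image_subset Xc k ⟨μ, hμ, rfl⟩
      have h2 : ‖μ ^ k‖₊ ≤ ‖Xc ^ k‖₊ := by
        have := spectrum.norm_le_norm_of_mem hpow
        exact_mod_cast this
      calc (‖μ‖₊ : ℝ≥0∞)
          = ((‖μ ^ k‖₊ : ℝ≥0∞)) ^ (1 / (k : ℝ)) := by
            rw [nnnorm_pow, ENNReal.coe_pow, ← ENNReal.rpow_natCast, ← ENNReal.rpow_mul,
              mul_one_div_cancel hk0, ENNReal.rpow_one]
        _ ≤ ((‖Xc ^ k‖₊ : ℝ≥0∞)) ^ (1 / (k : ℝ)) := by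
            exact ENNReal.rpow_le_rpow (by exact_mod_cast h2) (by positivity)
        _ = ((‖Yc ^ k‖₊ : ℝ≥0∞)) ^ (1 / (k : ℝ)) := by rw [hnorm k]
    have h3 := hle.trans hmono
    rw [← enorm_eq_nnnorm, ← ofReal_norm] at h3
    exact (ENNReal.ofReal_le_ofReal_iff h0).mp h3
  show sSup ((fun z : ℂ => ‖z‖) '' spectrum ℂ Xc) = sSup ((fun z : ℂ => ‖z‖) '' spectrum ℂ Yc)
  apply le_antisymm
  · refine csSup_le (hneX.image _) ?_
    rintro r ⟨μ, hμ, rfl⟩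
    exact hkey μ hμ
  · exact csSup_le_csSup hbdX (hneY.image _) (Set.image_mono hsub)
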